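/- Let H be a separable real Hilbert space with orthonormal basis (e_i), and let D = {±e_i} be the symmetrized basis dictionary. Let C = (c_p) be positive coefficients with ∑ c_p = ∞ and c_p → 0. Then for every f ∈ H, every greedy expansion of f with prescribed coefficients C and weakening parameter t ≤ 1 with respect to D has remainders satisfying liminf_{n→∞} ‖f_n‖ = 0. -/

import Mathlib

open RealInnerProductSpace Filter

set_option maxHeartbeats 1000000 in
theorem stmt_6 (H : Type*) [NormedAddCommGroup H] [InnerProductSpace ℝ H]
    (e : HilbertBasis ℕ ℝ H)
    (D : Set H) (hD : D = Set.range (e : ℕ → H) ∪ Set.range (fun i => -(e i)))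
    (c : ℕ → ℝ) (hc : ∀ p, 0 < c p)
    (hcdiv : Tendsto (fun n => ∑ p ∈ Finset.range n, c p) atTop atTop)
    (hc0 : Tendsto c atTop (nhds 0))
    (t : ℝ) (ht0 : 0 < t) (ht1 : t ≤ 1)
    (f : H) (φ F : ℕ → H)
    (hφD : ∀ m, φ m ∈ D)
    (hF0 : F 0 = f)
    (hsel : ∀ m, t * sSup ((fun g => ⟪F m, g⟫) '' D) ≤ ⟪F m, φ m⟫)
    (hrec : ∀ m, F (m + 1) = F m - c m • φ m) :
    liminf (fun n => ‖F n‖) atTop = 0 := by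
  classical
  -- basic facts about the basis
  have hee : ∀ i j : ℕ, ⟪(e i : H), e j⟫ = if i = j then 1 else 0 :=
    orthonormal_iff_ite.mp e.orthonormal
  have henorm : ∀ i : ℕ, ‖(e i : H)‖ = 1 := e.orthonormal.1
  -- decompose φ
  have hφex : ∀ m, ∃ s : ℝ, ∃ i : ℕ, (s = 1 ∨ s = -1) ∧ φ m = s • (e i : H) := by
    intro m
    have := hφD m
    rw [hD] at this
    rcases this with ⟨i, hi⟩ | ⟨i, hi⟩
    · exact ⟨1, i, Or.inl rfl, by rw [one_smul]; exact hi.symm⟩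
    · exact ⟨-1, i, Or.inr rfl, by simp only [neg_smul, one_smul]; exact hi.symm⟩
  choose sg idx hsg hφeq using hφex
  have hsgabs : ∀ m, |sg m| = 1 := by
    intro m; rcases hsg m with h | h <;> rw [h] <;> norm_num
  have hφnorm : ∀ m, ‖φ m‖ = 1 := by
    intro m; rw [hφeq m, norm_smul, Real.norm_eq_abs, hsgabs m, henorm, one_mul]
  -- coordinates
  set a : ℕ → ℕ → ℝ := fun m i => ⟪F m, e i⟫ with ha
  set σ : ℕ → ℝ := fun m => sSup ((fun g => ⟪F m, g⟫) '' D) with hσdef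
  have hDnorm : ∀ g ∈ D, ‖g‖ = 1 := by
    intro g hg
    rw [hD] at hg
    rcases hg with ⟨i, hi⟩ | ⟨i, hi⟩
    · rw [← hi]; exact henorm i
    · rw [← hi]; simpa using henorm i
  have hbdd : ∀ m, BddAbove ((fun g => ⟪F m, g⟫) '' D) := by
    intro m
    refine ⟨‖F m‖, ?_⟩
    rintro x ⟨g, hg, rfl⟩
    calc ⟪F m, g⟫ ≤ ‖F m‖ * ‖g‖ := real_inner_le_norm _ _
    _ = ‖F m‖ := by rw [hDnorm g hg, mul_one]
  have heD : ∀ i : ℕ, (e i : H) ∈ D := by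
    intro i; rw [hD]; exact Or.inl ⟨i, rfl⟩
  have hneD : ∀ i : ℕ, (-(e i) : H) ∈ D := by
    intro i; rw [hD]; exact Or.inr ⟨i, rfl⟩
  have hσai : ∀ m i, a m i ≤ σ m := by
    intro m i
    exact le_csSup (hbdd m) ⟨e i, heD i, rfl⟩
  have hσnai : ∀ m i, -(a m i) ≤ σ m := by
    intro m i
    have : -(a m i) = ⟪F m, -(e i : H)⟫ := by rw [inner_neg_right]
    rw [this]
    exact le_csSup (hbdd m) ⟨-(e i), hneD i, rfl⟩
  have habsσ : ∀ m i, |a m i| ≤ σ m := by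
    intro m i; rw [abs_le]; exact ⟨by linarith [hσnai m i], hσai m i⟩
  have hσ0 : ∀ m, 0 ≤ σ m := fun m => le_trans (abs_nonneg _) (habsσ m 0)
  have hyle : ∀ m, ⟪F m, φ m⟫ ≤ σ m := fun m => le_csSup (hbdd m) ⟨φ m, hφD m, rfl⟩
  have hty : ∀ m, t * σ m ≤ ⟪F m, φ m⟫ := hsel
  have hy0 : ∀ m, 0 ≤ ⟪F m, φ m⟫ :=
    fun m => le_trans (mul_nonneg ht0.le (hσ0 m)) (hty m)
  have hyval : ∀ m, ⟪F m, φ m⟫ = sg m * a m (idx m) := by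
    intro m; rw [hφeq m, real_inner_smul_right]
  -- coordinate recursion
  have hacoord : ∀ m i, a (m+1) i = a m i - (if idx m = i then c m * sg m else 0) := by
    intro m i
    show ⟪F (m+1), e i⟫ = _
    rw [hrec m, inner_sub_left, real_inner_smul_left, hφeq m, real_inner_smul_left, hee]
    by_cases h : idx m = i <;> simp [h] <;> ring
  -- Parseval
  have hsumm : ∀ x : H, Summable (fun i => (⟪x, e i⟫ : ℝ)^2) := by
    intro x
    have := e.summable_inner_mul_inner x x
    refine this.congr (fun i => ?_)
    rw [sq, real_inner_comm]
  have hpars : ∀ x : H, ∑' i, (⟪x, e i⟫ : ℝ)^2 = ‖x‖^2 := by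
    intro x
    have h1 := e.tsum_inner_mul_inner x x
    have h2 : ∀ i : ℕ, (⟪x, e i⟫ : ℝ) * ⟪e i, x⟫ = ⟪x, e i⟫^2 := by
      intro i; rw [sq, real_inner_comm]
    rw [tsum_congr h2] at h1
    rw [h1, real_inner_self_eq_norm_sq]
  -- energy identity
  have renergy : ∀ m, ‖F (m+1)‖^2 = ‖F m‖^2 - c m * (2*⟪F m, φ m⟫ - c m) := by
    intro m
    rw [hrec m, norm_sub_sq_real, real_inner_smul_right, norm_smul, Real.norm_eq_abs,
      abs_of_pos (hc m), hφnorm m]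
    ring
  -- σ is frequently small
  have hfreqσ : ∀ δ : ℝ, 0 < δ → ∀ N : ℕ, ∃ m, N ≤ m ∧ σ m < δ := by
    intro δ hδ N
    by_contra hcon
    push_neg at hcon
    have htδ : 0 < t * δ := mul_pos ht0 hδ
    obtain ⟨N₀, hN₀⟩ := eventually_atTop.mp (hc0.eventually (gt_mem_nhds htδ))
    set N₁ := max N N₀ with hN₁
    have hchain : ∀ k, ‖F (N₁ + k)‖^2 + t*δ*(∑ j ∈ Finset.range k, c (N₁ + j)) ≤ ‖F N₁‖^2 := by
      intro k
      induction k with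
      | zero => simp
      | succ k ih =>
        have hs : δ ≤ σ (N₁+k) :=
          hcon _ (le_trans (le_max_left _ _) (Nat.le_add_right _ _))
        have hcle : c (N₁+k) ≤ t*δ :=
          le_of_lt (hN₀ _ (le_trans (le_max_right _ _) (Nat.le_add_right _ _)))
        have hy : t*δ ≤ ⟪F (N₁+k), φ (N₁+k)⟫ := le_trans (by nlinarith) (hty _)
        have hre := renergy (N₁+k)
        have hdrop : t*δ*c (N₁+k) ≤ c (N₁+k) * (2*⟪F (N₁+k), φ (N₁+k)⟫ - c (N₁+k)) := by
          nlinarith [hc (N₁+k)]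
        have hidx : N₁ + (k+1) = (N₁+k)+1 := rfl
        rw [hidx, Finset.sum_range_succ, hre]
        linarith
    obtain ⟨n, hn1, hn2⟩ :=
      ((hcdiv.eventually_gt_atTop (‖F N₁‖^2 / (t*δ) + ∑ p ∈ Finset.range N₁, c p)).and
        (eventually_ge_atTop N₁)).exists
    obtain ⟨k, rfl⟩ := Nat.exists_eq_add_of_le hn2
    rw [Finset.sum_range_add] at hn1
    have h2 : ‖F N₁‖^2 / (t*δ) < ∑ j ∈ Finset.range k, c (N₁ + j) := by linarith
    have h3 : ‖F N₁‖^2 < t*δ*(∑ j ∈ Finset.range k, c (N₁ + j)) := by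
      rw [div_lt_iff₀ htδ] at h2; linarith [h2]
    linarith [hchain k, sq_nonneg ‖F (N₁ + k)‖]
  -- σ (m+1) ≤ max (σ m) (c m)
  have hσsucc : ∀ m, σ (m+1) ≤ max (σ m) (c m) := by
    intro m
    have habs : ∀ i, |a (m+1) i| ≤ max (σ m) (c m) := by
      intro i
      by_cases h : idx m = i
      · subst h
        have h1 : a (m+1) (idx m) = a m (idx m) - c m * sg m := by
          rw [hacoord]; simp
        have h2 : sg m * a (m+1) (idx m) = ⟪F m, φ m⟫ - c m := by
          rw [h1, hyval m]
          rcases hsg m with hs | hs <;> rw [hs] <;> ring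
        have h3 : |a (m+1) (idx m)| = |⟪F m, φ m⟫ - c m| := by
          rw [← h2, abs_mul, hsgabs, one_mul]
        rw [h3, abs_le]
        constructor
        · have h4 := hy0 m
          have h5 := hc m
          have := le_max_right (σ m) (c m)
          linarith
        · have h4 := hyle m
          have h5 := hc m
          have := le_max_left (σ m) (c m)
          linarith
      · have h1 : a (m+1) i = a m i := by rw [hacoord, if_neg h, sub_zero]
        rw [h1]; exact le_trans (habsσ m i) (le_max_left _ _)
    have hne : ((fun g => ⟪F (m+1), g⟫) '' D).Nonempty := ⟨_, ⟨e 0, heD 0, rfl⟩⟩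
    apply csSup_le hne
    rintro x ⟨g, hg, rfl⟩
    rw [hD] at hg
    rcases hg with ⟨i, hi⟩ | ⟨i, hi⟩
    · rw [← hi]
      exact le_trans (le_abs_self _) (habs i)
    · rw [← hi]
      show ⟪F (m+1), -(e i : H)⟫ ≤ _
      rw [inner_neg_right]
      exact le_trans (neg_le_abs _) (habs i)
  -- σ → 0
  have hσtend : Tendsto σ atTop (nhds 0) := by
    rw [Metric.tendsto_atTop]
    intro ε hε
    obtain ⟨M, hM⟩ := eventually_atTop.mp (hc0.eventually (gt_mem_nhds hε))
    obtain ⟨m₀, hm₀M, hm₀⟩ := hfreqσ ε hε M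
    have hind : ∀ k, σ (m₀ + k) < ε := by
      intro k
      induction k with
      | zero => simpa using hm₀
      | succ k ih =>
        have h1 := hσsucc (m₀ + k)
        have hck : c (m₀ + k) < ε := hM _ (le_trans hm₀M (Nat.le_add_right _ _))
        exact lt_of_le_of_lt h1 (max_lt ih hck)
    refine ⟨m₀, fun n hn => ?_⟩
    rw [Real.dist_eq, sub_zero, abs_of_nonneg (hσ0 n)]
    obtain ⟨k, rfl⟩ := Nat.exists_eq_add_of_le hn
    exact hind k
  -- the key frequent smallness of ‖F m‖
  suffices hfreq : ∀ δ : ℝ, 0 < δ → ∀ N : ℕ, ∃ m, N ≤ m ∧ ‖F m‖ < δ by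
    rw [liminf_eq]
    have hset : {x : ℝ | ∀ᶠ n in atTop, x ≤ ‖F n‖} = Set.Iic 0 := by
      ext x
      simp only [Set.mem_setOf_eq, Set.mem_Iic]
      constructor
      · intro hx
        by_contra hx0
        push_neg at hx0
        rw [eventually_atTop] at hx
        obtain ⟨N, hN⟩ := hx
        obtain ⟨m, hm, hm'⟩ := hfreq x hx0 N
        linarith [hN m hm]
      · intro hx
        filter_upwards with n
        linarith [norm_nonneg (F n)]
    rw [hset, csSup_Iic]
  -- Step 4: the counting argument
  intro δ hδ N
  by_contra hcon
  push_neg at hcon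
  -- tail choice
  set q : ℕ → ℝ := fun i => (a 0 i)^2 with hq
  have hqsum : Summable q := hsumm (F 0)
  have hq0 : ∀ i, 0 ≤ q i := fun i => sq_nonneg _
  have htail := tendsto_tsum_compl_atTop_zero q
  have htail2 : ∀ᶠ s : Finset ℕ in atTop, ∑' i : {x // x ∉ s}, q i < δ^2/2 :=
    htail.eventually (gt_mem_nhds (by positivity))
  obtain ⟨S, hS⟩ := htail2.exists
  set U : ℕ → Finset ℕ := fun m => S ∪ (Finset.range m).image idx with hU
  have hSU : ∀ m, S ⊆ U m := fun m => Finset.subset_union_left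
  have huntouch : ∀ m i, i ∉ (Finset.range m).image idx → a m i = a 0 i := by
    intro m
    induction m with
    | zero => intro i _; rfl
    | succ m ih =>
      intro i hi
      have h1 : i ∉ (Finset.range m).image idx := by
        intro h
        exact hi (Finset.image_subset_image (Finset.range_subset_range.mpr (Nat.le_succ m)) h)
      have h2 : idx m ≠ i := by
        intro h
        apply hi
        rw [← h]
        exact Finset.mem_image_of_mem idx (Finset.mem_range.mpr (Nat.lt_succ_self m))
      rw [hacoord, if_neg h2, sub_zero, ih i h1]
  -- the cardinality lower bound
  have hcard : ∀ m, N ≤ m → δ^2/2 ≤ σ m^2 * ((U m).card : ℝ) := by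
    intro m hm
    have h1 : δ^2 ≤ ‖F m‖^2 := by
      have := hcon m hm
      nlinarith [norm_nonneg (F m)]
    have hsm : Summable (fun i => (a m i)^2) := hsumm (F m)
    have hsplit : ∑ i ∈ U m, (a m i)^2 + ∑' i : {x // x ∉ U m}, (a m i)^2 = ‖F m‖^2 :=
      (Summable.sum_add_tsum_compl (s := U m) hsm).trans (hpars (F m))
    have hhead : ∑ i ∈ U m, (a m i)^2 ≤ ((U m).card : ℝ) * σ m^2 := by
      have h2 := Finset.sum_le_card_nsmul (U m) (fun i => (a m i)^2) (σ m ^2) ?_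
      · simpa [nsmul_eq_mul] using h2
      · intro i _
        have h3 := habsσ m i
        have h4 := abs_le.mp h3
        exact sq_le_sq' (by linarith) h4.2
    have htaileq : ∑' i : {x // x ∉ U m}, (a m i)^2 = ∑' i : {x // x ∉ U m}, q i := by
      apply tsum_congr
      rintro ⟨i, hi⟩
      have h5 : i ∉ (Finset.range m).image idx := fun h => hi (Finset.mem_union_right _ h)
      show (a m i)^2 = (a 0 i)^2
      rw [huntouch m i h5]
    have htail3 : ∑' i : {x // x ∉ U m}, q i ≤ ∑' i : {x // x ∉ S}, q i := by
      have e1 : ∑ i ∈ U m, q i + ∑' i : {x // x ∉ U m}, q ↑i = ∑' i, q i :=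
        Summable.sum_add_tsum_compl (s := U m) hqsum
      have e2 : ∑ i ∈ S, q i + ∑' i : {x // x ∉ S}, q ↑i = ∑' i, q i :=
        Summable.sum_add_tsum_compl (s := S) hqsum
      have e3 : ∑ i ∈ S, q i ≤ ∑ i ∈ U m, q i :=
        Finset.sum_le_sum_of_subset_of_nonneg (hSU m) (fun i _ _ => hq0 i)
      linarith
    nlinarith [hsplit, hhead, htaileq, htail3, hS, h1]
  -- fresh steps
  set Fr : ℕ → Finset ℕ := fun m => (Finset.range m).filter (fun p => idx p ∉ U p) with hFr
  have hbudget : ∀ m, ∑ p ∈ Fr m, (t * σ p)^2 ≤ ∑' i, q i := by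
    intro m
    have hterm : ∀ p ∈ Fr m, (t * σ p)^2 ≤ q (idx p) := by
      intro p hp
      have hfresh : idx p ∉ U p := (Finset.mem_filter.mp hp).2
      have hnt : idx p ∉ (Finset.range p).image idx := fun h => hfresh (Finset.mem_union_right _ h)
      have h1 : a p (idx p) = a 0 (idx p) := huntouch p _ hnt
      have h2 : |a p (idx p)| = |⟪F p, φ p⟫| := by
        rw [hyval p, abs_mul, hsgabs, one_mul]
      have h3 : t * σ p ≤ |a p (idx p)| := by
        rw [h2]; exact le_trans (hty p) (le_abs_self _)
      have h4 : 0 ≤ t * σ p := mul_nonneg ht0.le (hσ0 p)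
      have h5 : (t*σ p)^2 ≤ |a p (idx p)|^2 := by nlinarith [abs_nonneg (a p (idx p))]
      calc (t*σ p)^2 ≤ |a p (idx p)|^2 := h5
      _ = q (idx p) := by rw [sq_abs, h1]
    have hinj : ∀ x ∈ Fr m, ∀ y ∈ Fr m, idx x = idx y → x = y := by
      intro x hx y hy hxy
      by_contra hne
      rcases Nat.lt_or_ge x y with h | h
      · have h6 : idx y ∈ (Finset.range y).image idx := by
          rw [← hxy]
          exact Finset.mem_image_of_mem idx (Finset.mem_range.mpr h)
        exact (Finset.mem_filter.mp hy).2 (Finset.mem_union_right _ h6)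
      · have h7 : y < x := lt_of_le_of_ne h (fun hh => hne hh.symm)
        have h6 : idx x ∈ (Finset.range x).image idx := by
          rw [hxy]
          exact Finset.mem_image_of_mem idx (Finset.mem_range.mpr h7)
        exact (Finset.mem_filter.mp hx).2 (Finset.mem_union_right _ h6)
    calc ∑ p ∈ Fr m, (t*σ p)^2 ≤ ∑ p ∈ Fr m, q (idx p) := Finset.sum_le_sum hterm
    _ = ∑ i ∈ (Fr m).image idx, q i := (Finset.sum_image hinj).symm
    _ ≤ ∑' i, q i := Summable.sum_le_tsum _ (fun i _ => hq0 i) hqsum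
  set K := ∑' i, q i with hK
  -- card recursion
  have hUsucc : ∀ m, U (m+1) = insert (idx m) (U m) := by
    intro m
    show S ∪ (Finset.range (m+1)).image idx = insert (idx m) (S ∪ (Finset.range m).image idx)
    rw [Finset.range_add_one, Finset.image_insert, Finset.union_insert]
  -- telescoping the harmonic sum
  set Hn : ℕ → ℝ := fun n => ∑ j ∈ Finset.range n, 1/((j:ℝ)+1) with hHn
  have htel : ∀ m, ∑ p ∈ Fr m, 1/(((U p).card : ℝ)+1) + Hn ((U 0).card) = Hn ((U m).card) := by
    intro m
    induction m with
    | zero =>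
      have : Fr 0 = ∅ := by rw [hFr]; simp
      rw [this, Finset.sum_empty, zero_add]
    | succ m ih =>
      have hFrsucc : Fr (m+1)
          = if idx m ∉ U m then insert m (Fr m) else Fr m := by
        show (Finset.range (m+1)).filter _ = _
        rw [Finset.range_add_one, Finset.filter_insert]
      by_cases h : idx m ∉ U m
      · rw [hFrsucc, if_pos h]
        have hm : m ∉ Fr m := by
          intro hh
          have := (Finset.mem_filter.mp hh).1
          simp at this
        rw [Finset.sum_insert hm]
        have hcs : (U (m+1)).card = (U m).card + 1 := by
          rw [hUsucc]; exact Finset.card_insert_of_notMem h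
        rw [hcs]
        have hHs : Hn ((U m).card + 1) = Hn ((U m).card) + 1/(((U m).card : ℝ)+1) := by
          rw [hHn]
          exact Finset.sum_range_succ _ _
        rw [hHs]
        linarith [ih]
      · rw [hFrsucc, if_neg h]
        have hUeq : U (m+1) = U m := by
          rw [hUsucc, Finset.insert_eq_self.mpr (not_not.mp h)]
        rw [hUeq]
        exact ih
  -- dichotomy
  by_cases hBdd : ∃ Bc : ℕ, ∀ m, (U m).card ≤ Bc
  · obtain ⟨Bc, hBc⟩ := hBdd
    have hγpos : (0:ℝ) < δ^2/(2*((Bc:ℝ)+1)) := by positivity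
    have hσ2 : Tendsto (fun m => σ m^2) atTop (nhds 0) := by
      have h8 := hσtend.mul hσtend
      rw [mul_zero] at h8
      convert h8 using 2 with m
      exact sq (σ m) ▸ (sq (σ m)).symm ▸ rfl
    have hev : ∀ᶠ m in atTop, σ m^2 < δ^2/(2*((Bc:ℝ)+1)) ∧ N ≤ m :=
      (hσ2.eventually (gt_mem_nhds hγpos)).and (eventually_ge_atTop N)
    obtain ⟨m, h1, h2⟩ := hev.exists
    have h3 := hcard m h2
    have hcc : ((U m).card : ℝ) ≤ (Bc:ℝ)+1 := by
      have := hBc m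
      exact_mod_cast le_trans this (Nat.le_succ Bc)
    have h4 : σ m^2 * ((U m).card:ℝ) ≤ σ m^2*((Bc:ℝ)+1) :=
      mul_le_mul_of_nonneg_left hcc (sq_nonneg _)
    have h5 : σ m^2*((Bc:ℝ)+1) < (δ^2/(2*((Bc:ℝ)+1)))*((Bc:ℝ)+1) := by
      have hpos : (0:ℝ) < (Bc:ℝ)+1 := by positivity
      exact mul_lt_mul_of_pos_right h1 hpos
    have h6 : (δ^2/(2*((Bc:ℝ)+1)))*((Bc:ℝ)+1) = δ^2/2 := by
      field_simp
    linarith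
  · push_neg at hBdd
    -- uniform bound on the harmonic telescoped sum
    have hHbound : ∀ m, Hn ((U m).card) ≤ Hn ((U 0).card) + ((N:ℝ) + 2*K/(δ^2 * t^2)) := by
      intro m
      have hsplit := Finset.sum_filter_add_sum_filter_not (Fr m) (fun p => p < N)
        (fun p => 1/(((U p).card : ℝ)+1))
      have hb1 : ∑ p ∈ (Fr m).filter (fun p => p < N), 1/(((U p).card : ℝ)+1) ≤ (N:ℝ) := by
        have hsub : (Fr m).filter (fun p => p < N) ⊆ Finset.range N := by
          intro p hp
          exact Finset.mem_range.mpr (Finset.mem_filter.mp hp).2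
        calc ∑ p ∈ (Fr m).filter (fun p => p < N), 1/(((U p).card : ℝ)+1)
            ≤ ∑ p ∈ (Fr m).filter (fun p => p < N), 1 := by
              apply Finset.sum_le_sum
              intro p _
              have hc1 : (0:ℝ) ≤ ((U p).card : ℝ) := Nat.cast_nonneg _
              rw [div_le_one (by linarith)]
              linarith
        _ = ((Fr m).filter (fun p => p < N)).card := by rw [Finset.sum_const, nsmul_eq_mul, mul_one]
        _ ≤ (N:ℝ) := by
              have := Finset.card_le_card hsub
              rw [Finset.card_range] at this
              exact_mod_cast this
      have hb2 : ∑ p ∈ (Fr m).filter (fun p => ¬ p < N), 1/(((U p).card : ℝ)+1)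
          ≤ 2*K/(δ^2 * t^2) := by
        have hpt : ∀ p ∈ (Fr m).filter (fun p => ¬ p < N),
            1/(((U p).card : ℝ)+1) ≤ (2/(δ^2*t^2)) * (t * σ p)^2 := by
          intro p hp
          have hpN : N ≤ p := Nat.le_of_not_lt (Finset.mem_filter.mp hp).2
          have h6 := hcard p hpN
          have hup : (0:ℝ) < ((U p).card : ℝ)+1 := by
            have := Nat.cast_nonneg (α := ℝ) ((U p).card)
            linarith
          have h7 : δ^2/2 ≤ σ p^2 * (((U p).card : ℝ)+1) := by
            nlinarith [sq_nonneg (σ p)]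
          rw [div_le_iff₀ hup]
          have ht2 : (0:ℝ) < δ^2*t^2 := by positivity
          have hexp : (2/(δ^2*t^2)) * (t * σ p)^2 = (2/δ^2) * σ p^2 * (t^2/t^2) := by ring
          have htt : t^2/t^2 = 1 := div_self (by positivity)
          rw [hexp, htt, mul_one]
          rw [div_mul_eq_mul_div, div_mul_eq_mul_div, le_div_iff₀ (by positivity : (0:ℝ) < δ^2)]
          nlinarith [h7]
        calc ∑ p ∈ (Fr m).filter (fun p => ¬ p < N), 1/(((U p).card : ℝ)+1)
            ≤ ∑ p ∈ (Fr m).filter (fun p => ¬ p < N), (2/(δ^2*t^2)) * (t * σ p)^2 :=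
              Finset.sum_le_sum hpt
        _ = (2/(δ^2*t^2)) * ∑ p ∈ (Fr m).filter (fun p => ¬ p < N), (t * σ p)^2 := by
              rw [Finset.mul_sum]
        _ ≤ (2/(δ^2*t^2)) * ∑ p ∈ Fr m, (t * σ p)^2 := by
              apply mul_le_mul_of_nonneg_left _ (by positivity)
              apply Finset.sum_le_sum_of_subset_of_nonneg (Finset.filter_subset _ _)
              intro i _ _
              positivity
        _ ≤ (2/(δ^2*t^2)) * K := by
              apply mul_le_mul_of_nonneg_left (hbudget m) (by positivity)
        _ = 2*K/(δ^2 * t^2) := by ring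
      have h9 := htel m
      linarith
    have hdiv := Real.tendsto_sum_range_one_div_nat_succ_atTop
    have hHdiv : Tendsto Hn atTop atTop := by
      exact hdiv
    obtain ⟨n, hn⟩ := (hHdiv.eventually_gt_atTop (Hn ((U 0).card) + ((N:ℝ) + 2*K/(δ^2 * t^2)))).exists
    obtain ⟨m, hm⟩ := hBdd n
    have hmono : Hn n ≤ Hn ((U m).card) := by
      rw [hHn]
      apply Finset.sum_le_sum_of_subset_of_nonneg
      · exact Finset.range_subset_range.mpr (le_of_lt hm)
      · intro i _ _
        positivity
    linarith [hHbound m]
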